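/- Let ρ and σ be (possibly empty) binary strings and let j ≥ 1. Then the threshold graphs G = T(ρ 1 0 1^j 0 1 σ) and G' = T(ρ 0 1^{j+2} 0 σ) have the same number of vertices and edges, i(G) > i(G'), and i_k(G) ≥ i_k(G') for every k ≥ 0. -/

import Mathlib

/-!
Common definitions: threshold graphs from binary codes, counts of matchings and
independent sets, lex and colex graphs, and almost alternating codes.

A binary code is a `List Bool` whose head is the *leftmost* (most significant,
last added) digit; `true` stands for the digit `1` and `false` for `0`.
Reading the code from right to left, each digit adds a vertex: a `1` adds a
dominating vertex and a `0` adds an isolated vertex.  Equivalently, the vertex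
at position `i` (from the left) is adjacent to every vertex to its right iff
its digit is `1`.  Note that the value of the rightmost digit (the star) never
affects the graph.
-/

/-- The threshold graph encoded by a binary code `σ`. -/
def threshOf (σ : List Bool) : SimpleGraph (Fin σ.length) where
  Adj i j := i ≠ j ∧ σ.get (min i j) = true
  symm := by
    refine ⟨?_⟩
    intro i j h
    refine ⟨h.1.symm, ?_⟩
    rw [min_comm]
    exact h.2
  loopless := by
    refine ⟨?_⟩
    intro i h
    exact h.1 rfl

/-- The number of edges of a graph. -/
noncomputable def edgeCount {V : Type*} (G : SimpleGraph V) : ℕ := Nat.card G.edgeSet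

/-- `M` is a matching of `G`: a set of pairwise disjoint edges of `G`. -/
def IsMatchingSet {V : Type*} (G : SimpleGraph V) (M : Finset (Sym2 V)) : Prop :=
  (∀ e ∈ M, e ∈ G.edgeSet) ∧ ∀ e ∈ M, ∀ f ∈ M, e ≠ f → ∀ v : V, v ∈ e → v ∉ f

/-- `m(G)`: the total number of matchings of `G` (including the empty matching). -/
noncomputable def matchCount {V : Type*} (G : SimpleGraph V) : ℕ :=
  Nat.card {M : Finset (Sym2 V) // IsMatchingSet G M}

/-- `m_k(G)`: the number of matchings of `G` of size `k`. -/
noncomputable def matchCountK {V : Type*} (G : SimpleGraph V) (k : ℕ) : ℕ :=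
  Nat.card {M : Finset (Sym2 V) // IsMatchingSet G M ∧ M.card = k}

/-- `i(G)`: the number of independent sets of `G` (including the empty set). -/
noncomputable def indCount {V : Type*} (G : SimpleGraph V) : ℕ :=
  Nat.card {S : Finset V // ∀ u ∈ S, ∀ v ∈ S, ¬ G.Adj u v}

/-- `i_k(G)`: the number of independent sets of `G` of size `k`. -/
noncomputable def indCountK {V : Type*} (G : SimpleGraph V) (k : ℕ) : ℕ :=
  Nat.card {S : Finset V // (∀ u ∈ S, ∀ v ∈ S, ¬ G.Adj u v) ∧ S.card = k}

/-- Two codes encode the same threshold graph: they have the same length and agree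
except possibly in the rightmost (starred) digit. -/
def CodeEquiv (σ τ : List Bool) : Prop := σ.length = τ.length ∧ σ.dropLast = τ.dropLast

/-- Words that are concatenations of copies of the letters `a = 01` and `b = 10`. -/
inductive IsABWord : List Bool → Prop
  | nil : IsABWord []
  | a {w : List Bool} : IsABWord w → IsABWord (false :: true :: w)
  | b {w : List Bool} : IsABWord w → IsABWord (true :: false :: w)

/-- `w` is a concatenation of `α` copies of the letter `a = 01` and `β` copies of the
letter `b = 10`, in some order. -/
def IsABWordWith (α β : ℕ) (w : List Bool) : Prop :=
  ∃ ls : List (List Bool), (∀ x ∈ ls, x = [false, true] ∨ x = [true, false]) ∧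
    ls.count [false, true] = α ∧ ls.count [true, false] = β ∧ w = ls.flatten

/-- A code is almost alternating if (possibly after reinterpreting the starred rightmost
digit) it is an initial constant block followed by a word in the letters `a = 01` and
`b = 10`, either using the rightmost digit as the final digit of the last letter
(unstarred case) or keeping the rightmost digit separate after the word (starred case). -/
def IsAlmostAltCode (σ : List Bool) : Prop :=
  ∃ τ : List Bool, CodeEquiv σ τ ∧
    ∃ (t : ℕ) (c : Bool) (w : List Bool), IsABWord w ∧
      (τ = List.replicate t c ++ w ∨ ∃ d : Bool, τ = List.replicate t c ++ w ++ [d])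

/-- A small almost alternating code: the initial block consists of `0`'s (or is empty). -/
def IsSmallAACode (σ : List Bool) : Prop :=
  ∃ τ : List Bool, CodeEquiv σ τ ∧
    ∃ (t : ℕ) (w : List Bool), IsABWord w ∧
      (τ = List.replicate t false ++ w ∨ ∃ d : Bool, τ = List.replicate t false ++ w ++ [d])

/-- A large almost alternating code: the initial block is a nonempty block of `1`'s. -/
def IsLargeAACode (σ : List Bool) : Prop :=
  ∃ τ : List Bool, CodeEquiv σ τ ∧
    ∃ (t : ℕ) (w : List Bool), 1 ≤ t ∧ IsABWord w ∧
      (τ = List.replicate t true ++ w ∨ ∃ d : Bool, τ = List.replicate t true ++ w ++ [d])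

/-- A code has a bracketed string if (possibly after reinterpreting the starred rightmost
digit) it contains a substring `1 0^j 1` or `0 1^j 0` with `j ≥ 3`. -/
def HasBracketedString (σ : List Bool) : Prop :=
  ∃ τ : List Bool, CodeEquiv σ τ ∧ ∃ (x y : List Bool) (j : ℕ), 3 ≤ j ∧
    (τ = x ++ [true] ++ List.replicate j false ++ [true] ++ y ∨
     τ = x ++ [false] ++ List.replicate j true ++ [false] ++ y)

/-- A code has a separation issue if it contains two pairs of repeated digits separated by
a substring of odd length, where the first pair is immediately preceded by the opposite
digit and the second pair is followed by at least one further digit. -/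
def HasSeparationIssue (σ : List Bool) : Prop :=
  ∃ (x m y : List Bool) (d c : Bool),
    Odd m.length ∧ y ≠ [] ∧ σ = x ++ [!d, d, d] ++ m ++ [c, c] ++ y

/-- The colex graph `C(n,e)`: the graph on `Fin n` whose edges are the first `e` pairs in
the colexicographic order.  The pair `{i, j}` with `i < j` has rank `j(j-1)/2 + i` in
this order. -/
def colexGraph (n e : ℕ) : SimpleGraph (Fin n) where
  Adj i j := i ≠ j ∧ max i.val j.val * (max i.val j.val - 1) / 2 + min i.val j.val < e
  symm := by
    refine ⟨?_⟩
    intro i j h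
    refine ⟨h.1.symm, ?_⟩
    rw [max_comm j.val i.val, min_comm j.val i.val]
    exact h.2
  loopless := by
    refine ⟨?_⟩
    intro i h
    exact h.1 rfl

/-- The lex graph `L(n,e)`: the graph on `Fin n` whose edges are the first `e` pairs in
the lexicographic order.  The pair `{i, j}` with `i < j` has rank
`i(n-1) - i(i-1)/2 + (j - i - 1)` in this order. -/
def lexGraph (n e : ℕ) : SimpleGraph (Fin n) where
  Adj i j := i ≠ j ∧
    min i.val j.val * (n - 1) - min i.val j.val * (min i.val j.val - 1) / 2
      + (max i.val j.val - min i.val j.val - 1) < e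
  symm := by
    refine ⟨?_⟩
    intro i j h
    refine ⟨h.1.symm, ?_⟩
    rw [max_comm j.val i.val, min_comm j.val i.val]
    exact h.2
  loopless := by
    refine ⟨?_⟩
    intro i h
    exact h.1 rfl

instance (σ : List Bool) : DecidableRel (threshOf σ).Adj := fun i j =>
  inferInstanceAs (Decidable (i ≠ j ∧ σ.get (min i j) = true))

lemma fin_succ_min {n : ℕ} (i j : Fin n) : min i.succ j.succ = (min i j).succ := by
  rcases le_total i j with h | h
  · rw [min_eq_left h, min_eq_left (Fin.succ_le_succ_iff.mpr h)]
  · rw [min_eq_right h, min_eq_right (Fin.succ_le_succ_iff.mpr h)]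

lemma adj_succ (b : Bool) (w : List Bool) (i j : Fin w.length) :
    (threshOf (b :: w)).Adj i.succ j.succ ↔ (threshOf w).Adj i j := by
  show (i.succ ≠ j.succ ∧ (b :: w).get (min i.succ j.succ) = true) ↔ _
  rw [fin_succ_min]
  constructor
  · rintro ⟨h1, h2⟩
    exact ⟨fun h => h1 (by rw [h]), h2⟩
  · rintro ⟨h1, h2⟩
    exact ⟨fun h => h1 (Fin.succ_injective _ h), h2⟩

lemma adj_zero (b : Bool) (w : List Bool) (v : Fin (w.length + 1)) :
    (threshOf (b :: w)).Adj (0 : Fin (w.length + 1)) v ↔ (v ≠ 0 ∧ b = true) := by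
  show ((0 : Fin (w.length + 1)) ≠ v ∧ (b :: w).get (min (0 : Fin (w.length + 1)) v) = true) ↔ _
  rw [min_eq_left (Fin.zero_le v)]
  simp [eq_comm]

def upF {n : ℕ} (S : Finset (Fin n)) : Finset (Fin (n + 1)) :=
  S.map ⟨Fin.succ, Fin.succ_injective n⟩

def downF {n : ℕ} (S : Finset (Fin (n + 1))) : Finset (Fin n) :=
  Finset.univ.filter fun i => i.succ ∈ S

@[simp] lemma mem_upF {n : ℕ} {S : Finset (Fin n)} {i : Fin n} :
    i.succ ∈ upF S ↔ i ∈ S := by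
  simp [upF, Fin.succ_injective n |>.eq_iff]

@[simp] lemma zero_not_mem_upF {n : ℕ} (S : Finset (Fin n)) : (0 : Fin (n+1)) ∉ upF S := by
  simp [upF, Fin.succ_ne_zero, eq_comm]

@[simp] lemma card_upF {n : ℕ} (S : Finset (Fin n)) : (upF S).card = S.card :=
  Finset.card_map _

@[simp] lemma mem_downF {n : ℕ} {S : Finset (Fin (n + 1))} {i : Fin n} :
    i ∈ downF S ↔ i.succ ∈ S := by simp [downF]

@[simp] lemma downF_upF {n : ℕ} (S : Finset (Fin n)) : downF (upF S) = S := by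
  ext i; simp

lemma upF_downF {n : ℕ} (S : Finset (Fin (n + 1))) : upF (downF S) = S.erase 0 := by
  ext x
  refine Fin.cases ?_ ?_ x
  · simp
  · intro i
    simp [Fin.succ_ne_zero]

lemma mem_upF' {n : ℕ} {S : Finset (Fin n)} {x : Fin (n+1)} (hx : x ∈ upF S) :
    ∃ i : Fin n, i ∈ S ∧ x = i.succ := by
  simp only [upF, Finset.mem_map, Function.Embedding.coeFn_mk] at hx
  obtain ⟨i, hi, rfl⟩ := hx
  exact ⟨i, hi, rfl⟩

def Ind (τ : List Bool) (S : Finset (Fin τ.length)) : Prop :=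
  ∀ u ∈ S, ∀ v ∈ S, ¬ (threshOf τ).Adj u v

instance (τ : List Bool) (S : Finset (Fin τ.length)) : Decidable (Ind τ S) := by
  unfold Ind; infer_instance

lemma ind_upF {b : Bool} {w : List Bool} {S : Finset (Fin w.length)} :
    Ind (b :: w) (upF S) ↔ Ind w S := by
  constructor
  · intro h u hu v hv hadj
    exact h u.succ (mem_upF.mpr hu) v.succ (mem_upF.mpr hv) ((adj_succ b w u v).mpr hadj)
  · intro h u hu v hv hadj
    obtain ⟨i, hi, rfl⟩ := mem_upF' hu
    obtain ⟨j, hj, rfl⟩ := mem_upF' hv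
    exact h i hi j hj ((adj_succ b w i j).mp hadj)

lemma ind_of_not_mem {b : Bool} {w : List Bool} {S : Finset (Fin (w.length + 1))}
    (h0 : (0 : Fin (w.length + 1)) ∉ S) : Ind (b :: w) S ↔ Ind w (downF S) := by
  rw [show S = upF (downF S) by rw [upF_downF, Finset.erase_eq_of_notMem h0]]
  rw [downF_upF]
  exact ind_upF

lemma ind_false_iff {w : List Bool} {S : Finset (Fin (w.length + 1))} :
    Ind (false :: w) S ↔ Ind w (downF S) := by
  constructor
  · intro h u hu v hv hadj
    exact h u.succ (mem_downF.mp hu) v.succ (mem_downF.mp hv) ((adj_succ false w u v).mpr hadj)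
  · intro h u hu v hv hadj
    refine Fin.cases ?_ ?_ u hu hadj <;> clear hu hadj u
    · intro _ hadj
      rw [adj_zero] at hadj
      simp at hadj
    · intro i hu hadj
      refine Fin.cases ?_ ?_ v hv hadj <;> clear hv hadj v
      · intro _ hadj
        have := hadj.symm
        rw [adj_zero] at this
        simp at this
      · intro j hv hadj
        exact h i (mem_downF.mpr hu) j (mem_downF.mpr hv) ((adj_succ false w i j).mp hadj)

lemma ind_true_zero_mem {w : List Bool} {S : Finset (Fin (w.length + 1))}
    (h : Ind (true :: w) S) (h0 : (0 : Fin (w.length + 1)) ∈ S) : S = {0} := by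
  apply Finset.eq_singleton_iff_unique_mem.mpr
  refine ⟨h0, fun v hv => ?_⟩
  by_contra hne
  exact h (0 : Fin (w.length + 1)) h0 v hv ((adj_zero true w v).mpr ⟨hne, rfl⟩)

lemma ind_singleton (τ : List Bool) (a : Fin τ.length) : Ind τ {a} := by
  intro u hu v hv hadj
  simp only [Finset.mem_singleton] at hu hv
  subst hu; subst hv
  exact (threshOf τ).loopless.irrefl _ hadj

open Finset

lemma card_downF_of_not_mem {n : ℕ} {S : Finset (Fin (n + 1))}
    (h0 : (0 : Fin (n + 1)) ∉ S) : (downF S).card = S.card := by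
  rw [← card_upF (downF S), upF_downF, Finset.erase_eq_of_notMem h0]

lemma card_downF_of_mem {n : ℕ} {S : Finset (Fin (n + 1))}
    (h0 : (0 : Fin (n + 1)) ∈ S) : (downF S).card + 1 = S.card := by
  rw [← card_upF (downF S), upF_downF, Finset.card_erase_add_one h0]

lemma downF_insert_upF {n : ℕ} (S : Finset (Fin n)) :
    downF (insert (0 : Fin (n + 1)) (upF S)) = S := by
  ext i
  simp [Fin.succ_ne_zero]

lemma indCountK_eq (τ : List Bool) (k : ℕ) :
    indCountK (threshOf τ) k =
      (Finset.univ.filter fun S : Finset (Fin τ.length) => Ind τ S ∧ S.card = k).card := by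
  have : indCountK (threshOf τ) k = Nat.card {S : Finset (Fin τ.length) // Ind τ S ∧ S.card = k} := rfl
  rw [this, Nat.card_eq_fintype_card, Fintype.card_subtype]

lemma indCount_eq (τ : List Bool) :
    indCount (threshOf τ) =
      (Finset.univ.filter fun S : Finset (Fin τ.length) => Ind τ S).card := by
  have : indCount (threshOf τ) = Nat.card {S : Finset (Fin τ.length) // Ind τ S} := rfl
  rw [this, Nat.card_eq_fintype_card, Fintype.card_subtype]

lemma card_no_zero_gen (b : Bool) (w : List Bool) (p : ℕ → Prop) [DecidablePred p] :
    (Finset.univ.filter fun S : Finset (Fin (w.length + 1)) =>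
        (Ind (b :: w) S ∧ p S.card) ∧ (0 : Fin (w.length + 1)) ∉ S).card
      = (Finset.univ.filter fun S : Finset (Fin w.length) => Ind w S ∧ p S.card).card := by
  refine Finset.card_bij' (fun S _ => downF S) (fun S _ => upF S) ?_ ?_ ?_ ?_
  · intro S hS
    simp only [Finset.mem_filter, Finset.mem_univ, true_and] at hS ⊢
    obtain ⟨⟨hI, hp⟩, h0⟩ := hS
    rw [card_downF_of_not_mem h0]
    exact ⟨(ind_of_not_mem h0).mp hI, hp⟩
  · intro S hS
    simp only [Finset.mem_filter, Finset.mem_univ, true_and] at hS ⊢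
    obtain ⟨hI, hp⟩ := hS
    rw [card_upF]
    exact ⟨⟨ind_upF.mpr hI, hp⟩, zero_not_mem_upF S⟩
  · intro S hS
    simp only [Finset.mem_filter, Finset.mem_univ, true_and] at hS
    show upF (downF S) = S
    rw [upF_downF, Finset.erase_eq_of_notMem hS.2]
  · intro S _
    exact downF_upF S

lemma card_with_zero_false_gen (w : List Bool) (p : ℕ → Prop) [DecidablePred p] :
    (Finset.univ.filter fun S : Finset (Fin (w.length + 1)) =>
        (Ind (false :: w) S ∧ p S.card) ∧ (0 : Fin (w.length + 1)) ∈ S).card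
      = (Finset.univ.filter fun S : Finset (Fin w.length) => Ind w S ∧ p (S.card + 1)).card := by
  refine Finset.card_bij' (fun S _ => downF S)
    (fun S _ => insert (0 : Fin (w.length + 1)) (upF S)) ?_ ?_ ?_ ?_
  · intro S hS
    simp only [Finset.mem_filter, Finset.mem_univ, true_and] at hS ⊢
    obtain ⟨⟨hI, hp⟩, h0⟩ := hS
    rw [card_downF_of_mem h0]
    exact ⟨ind_false_iff.mp hI, hp⟩
  · intro S hS
    simp only [Finset.mem_filter, Finset.mem_univ, true_and] at hS ⊢
    obtain ⟨hI, hp⟩ := hS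
    rw [Finset.card_insert_of_notMem (zero_not_mem_upF S), card_upF]
    refine ⟨⟨?_, hp⟩, Finset.mem_insert_self _ _⟩
    rw [ind_false_iff, downF_insert_upF]
    exact hI
  · intro S hS
    simp only [Finset.mem_filter, Finset.mem_univ, true_and] at hS
    show insert 0 (upF (downF S)) = S
    rw [upF_downF, Finset.insert_erase hS.2]
  · intro S _
    exact downF_insert_upF S

lemma filter_split_zero {n : ℕ} (P : Finset (Fin (n + 1)) → Prop) [DecidablePred P] :
    (Finset.univ.filter P).card
      = (Finset.univ.filter fun S => P S ∧ (0 : Fin (n + 1)) ∈ S).card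
        + (Finset.univ.filter fun S => P S ∧ (0 : Fin (n + 1)) ∉ S).card := by
  rw [← Finset.filter_filter, ← Finset.filter_filter,
    Finset.card_filter_add_card_filter_not]

lemma card_with_zero_true (w : List Bool) (k : ℕ) :
    (Finset.univ.filter fun S : Finset (Fin (w.length + 1)) =>
        (Ind (true :: w) S ∧ S.card = k) ∧ (0 : Fin (w.length + 1)) ∈ S).card
      = if k = 1 then 1 else 0 := by
  split_ifs with hk
  · subst hk
    rw [show (Finset.univ.filter fun S : Finset (Fin (w.length + 1)) =>
        (Ind (true :: w) S ∧ S.card = 1) ∧ (0 : Fin (w.length + 1)) ∈ S) = {{0}} from ?_]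
    · exact Finset.card_singleton _
    ext S
    simp only [Finset.mem_filter, Finset.mem_univ, true_and, Finset.mem_singleton]
    constructor
    · rintro ⟨⟨hI, _⟩, h0⟩
      exact ind_true_zero_mem hI h0
    · rintro rfl
      exact ⟨⟨ind_singleton _ _, Finset.card_singleton _⟩, Finset.mem_singleton_self _⟩
  · rw [Finset.card_eq_zero]
    ext S
    simp only [Finset.mem_filter, Finset.mem_univ, true_and, Finset.notMem_empty, iff_false]
    rintro ⟨⟨hI, hc⟩, h0⟩
    rw [ind_true_zero_mem hI h0] at hc
    simp at hc
    exact hk hc.symm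

lemma card_with_zero_true' (w : List Bool) :
    (Finset.univ.filter fun S : Finset (Fin (w.length + 1)) =>
        Ind (true :: w) S ∧ (0 : Fin (w.length + 1)) ∈ S).card = 1 := by
  rw [show (Finset.univ.filter fun S : Finset (Fin (w.length + 1)) =>
      Ind (true :: w) S ∧ (0 : Fin (w.length + 1)) ∈ S) = {{0}} from ?_]
  · exact Finset.card_singleton _
  ext S
  simp only [Finset.mem_filter, Finset.mem_univ, true_and, Finset.mem_singleton]
  constructor
  · rintro ⟨hI, h0⟩
    exact ind_true_zero_mem hI h0
  · rintro rfl
    exact ⟨ind_singleton _ _, Finset.mem_singleton_self _⟩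

lemma count_nil (k : ℕ) : indCountK (threshOf []) k = if k = 0 then 1 else 0 := by
  rw [indCountK_eq]
  have huniv : (Finset.univ : Finset (Finset (Fin ([] : List Bool).length))) = {∅} := by
    ext S
    simp only [Finset.mem_univ, Finset.mem_singleton, true_iff]
    exact Finset.eq_empty_of_forall_notMem fun x _ => (Fin.elim0 (x : Fin 0))
  rw [huniv]
  split_ifs with hk
  · subst hk
    rw [Finset.filter_singleton]
    simp [Ind]
  · rw [Finset.filter_singleton]
    simp only [Finset.card_empty]
    refine (congrArg Finset.card (if_neg ?_)).trans ?_
    · rintro ⟨-, h⟩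
      exact hk h.symm
    · simp

lemma count_true (w : List Bool) (k : ℕ) :
    indCountK (threshOf (true :: w)) k
      = indCountK (threshOf w) k + if k = 1 then 1 else 0 := by
  rw [indCountK_eq, indCountK_eq]
  rw [show (Finset.univ.filter fun S : Finset (Fin (true :: w).length) =>
      Ind (true :: w) S ∧ S.card = k).card
    = (Finset.univ.filter fun S : Finset (Fin (w.length + 1)) =>
      Ind (true :: w) S ∧ S.card = k).card from rfl]
  rw [filter_split_zero, card_with_zero_true,
    card_no_zero_gen true w (fun m => m = k)]
  ring

lemma count_false (w : List Bool) (k : ℕ) :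
    indCountK (threshOf (false :: w)) (k + 1)
      = indCountK (threshOf w) (k + 1) + indCountK (threshOf w) k := by
  rw [indCountK_eq, indCountK_eq, indCountK_eq]
  rw [show (Finset.univ.filter fun S : Finset (Fin (false :: w).length) =>
      Ind (false :: w) S ∧ S.card = k + 1).card
    = (Finset.univ.filter fun S : Finset (Fin (w.length + 1)) =>
      Ind (false :: w) S ∧ S.card = k + 1).card from rfl]
  rw [filter_split_zero, card_with_zero_false_gen w (fun m => m = k + 1),
    card_no_zero_gen false w (fun m => m = k + 1)]
  simp only [Nat.add_right_cancel_iff]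
  ring

lemma count_zero (τ : List Bool) : indCountK (threshOf τ) 0 = 1 := by
  rw [indCountK_eq]
  rw [show (Finset.univ.filter fun S : Finset (Fin τ.length) => Ind τ S ∧ S.card = 0) = {∅} from ?_]
  · exact Finset.card_singleton _
  ext S
  simp only [Finset.mem_filter, Finset.mem_univ, true_and, Finset.mem_singleton,
    Finset.card_eq_zero]
  constructor
  · rintro ⟨-, h⟩; exact h
  · rintro rfl
    exact ⟨fun u hu => by simp at hu, rfl⟩

lemma total_nil : indCount (threshOf []) = 1 := by
  rw [indCount_eq]
  have huniv : (Finset.univ : Finset (Finset (Fin ([] : List Bool).length))) = {∅} := by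
    ext S
    simp only [Finset.mem_univ, Finset.mem_singleton, true_iff]
    exact Finset.eq_empty_of_forall_notMem fun x _ => (Fin.elim0 (x : Fin 0))
  rw [huniv, Finset.filter_singleton]
  simp [Ind]

lemma total_true (w : List Bool) :
    indCount (threshOf (true :: w)) = indCount (threshOf w) + 1 := by
  rw [indCount_eq, indCount_eq]
  rw [show (Finset.univ.filter fun S : Finset (Fin (true :: w).length) =>
      Ind (true :: w) S).card
    = (Finset.univ.filter fun S : Finset (Fin (w.length + 1)) =>
      Ind (true :: w) S).card from rfl]
  rw [filter_split_zero, card_with_zero_true']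
  have := card_no_zero_gen true w (fun _ => True)
  simp only [and_true] at this
  rw [this]
  ring

lemma total_false (w : List Bool) :
    indCount (threshOf (false :: w)) = 2 * indCount (threshOf w) := by
  rw [indCount_eq, indCount_eq]
  rw [show (Finset.univ.filter fun S : Finset (Fin (false :: w).length) =>
      Ind (false :: w) S).card
    = (Finset.univ.filter fun S : Finset (Fin (w.length + 1)) =>
      Ind (false :: w) S).card from rfl]
  rw [filter_split_zero]
  have h1 := card_with_zero_false_gen w (fun _ => True)
  have h2 := card_no_zero_gen false w (fun _ => True)
  simp only [and_true] at h1 h2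
  rw [h1, h2]
  ring

lemma edgeCount_eq (τ : List Bool) : edgeCount (threshOf τ) = (threshOf τ).edgeFinset.card := by
  rw [edgeCount, Nat.card_coe_set_eq, Set.ncard_eq_toFinset_card']
  exact congrArg Finset.card (by ext e; simp)

lemma deg_zero (b : Bool) (w : List Bool) :
    (threshOf (b :: w)).degree (0 : Fin (w.length + 1)) = if b then w.length else 0 := by
  rw [SimpleGraph.degree, SimpleGraph.neighborFinset]
  cases b
  · rw [show ((threshOf (false :: w)).neighborSet (0 : Fin (w.length + 1))).toFinset = ∅ from ?_]
    · simp
    ext v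
    simp only [Set.mem_toFinset, SimpleGraph.mem_neighborSet, Finset.notMem_empty, iff_false]
    rw [adj_zero]
    simp
  · rw [show ((threshOf (true :: w)).neighborSet (0 : Fin (w.length + 1))).toFinset
        = Finset.univ.erase (0 : Fin (w.length + 1)) from ?_]
    · simp
    ext v
    simp only [Set.mem_toFinset, SimpleGraph.mem_neighborSet, Finset.mem_erase, Finset.mem_univ,
      and_true]
    rw [adj_zero]
    simp

lemma deg_succ (b : Bool) (w : List Bool) (i : Fin w.length) :
    (threshOf (b :: w)).degree i.succ = (threshOf w).degree i + if b then 1 else 0 := by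
  rw [SimpleGraph.degree, SimpleGraph.degree, SimpleGraph.neighborFinset,
    SimpleGraph.neighborFinset]
  cases b
  · rw [show ((threshOf (false :: w)).neighborSet i.succ).toFinset
        = upF ((threshOf w).neighborSet i).toFinset from ?_]
    · simp
    ext v
    refine Fin.cases ?_ ?_ v
    · simp only [Set.mem_toFinset, SimpleGraph.mem_neighborSet]
      constructor
      · intro h
        have := ((threshOf (false :: w)).symm.symm _ _ h)
        rw [adj_zero] at this
        simp at this
      · intro h
        exact absurd h (zero_not_mem_upF _)
    · intro j
      simp only [Set.mem_toFinset, SimpleGraph.mem_neighborSet, mem_upF]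
      exact adj_succ false w i j
  · rw [show ((threshOf (true :: w)).neighborSet i.succ).toFinset
        = insert (0 : Fin (w.length + 1)) (upF ((threshOf w).neighborSet i).toFinset) from ?_]
    · rw [Finset.card_insert_of_notMem (zero_not_mem_upF _), card_upF]
      simp
    ext v
    refine Fin.cases ?_ ?_ v
    · simp only [Set.mem_toFinset, SimpleGraph.mem_neighborSet, Finset.mem_insert]
      constructor
      · intro _; exact Or.inl trivial
      · intro _
        exact (threshOf (true :: w)).symm.symm _ _ ((adj_zero true w i.succ).mpr ⟨Fin.succ_ne_zero i, rfl⟩)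
    · intro j
      simp only [Set.mem_toFinset, SimpleGraph.mem_neighborSet, Finset.mem_insert, mem_upF]
      rw [adj_succ]
      constructor
      · intro h; right; simpa using h
      · rintro (h | h)
        · exact absurd h (Fin.succ_ne_zero j)
        · simpa using h

lemma edge_cons (b : Bool) (w : List Bool) :
    edgeCount (threshOf (b :: w)) = edgeCount (threshOf w) + (if b then w.length else 0) := by
  have h1 := SimpleGraph.sum_degrees_eq_twice_card_edges (threshOf (b :: w))
  have h2 := SimpleGraph.sum_degrees_eq_twice_card_edges (threshOf w)
  have hsum : ∑ v : Fin (b :: w).length, (threshOf (b :: w)).degree v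
      = ∑ v : Fin w.length, (threshOf w).degree v + 2 * (if b then w.length else 0) := by
    rw [show (∑ v : Fin (b :: w).length, (threshOf (b :: w)).degree v)
        = ∑ v : Fin (w.length + 1), (threshOf (b :: w)).degree v from rfl]
    rw [Fin.sum_univ_succ, deg_zero]
    have : ∀ i : Fin w.length, (threshOf (b :: w)).degree i.succ
        = (threshOf w).degree i + if b then 1 else 0 := deg_succ b w
    rw [Finset.sum_congr rfl fun i _ => this i, Finset.sum_add_distrib]
    cases b <;> simp <;> ring
  rw [edgeCount_eq, edgeCount_eq]
  omega

lemma edge_nil : edgeCount (threshOf []) = 0 := by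
  have h1 := SimpleGraph.sum_degrees_eq_twice_card_edges (threshOf [])
  rw [edgeCount_eq]
  have : (∑ v : Fin ([] : List Bool).length, (threshOf []).degree v) = 0 := by
    apply Finset.sum_eq_zero
    intro x _
    exact (Fin.elim0 (x : Fin 0))
  omega

def N : List Bool → ℕ → ℕ
  | [], 0 => 1
  | [], _ + 1 => 0
  | true :: w, k => N w k + if k = 1 then 1 else 0
  | false :: w, 0 => N w 0
  | false :: w, k + 1 => N w (k + 1) + N w k

def Ntot : List Bool → ℕ
  | [] => 1
  | true :: w => Ntot w + 1
  | false :: w => 2 * Ntot w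

def Ecnt : List Bool → ℕ
  | [] => 0
  | b :: w => Ecnt w + if b then w.length else 0

lemma N_eq (τ : List Bool) (k : ℕ) : indCountK (threshOf τ) k = N τ k := by
  induction τ generalizing k with
  | nil =>
    rw [count_nil]
    cases k <;> simp [N]
  | cons b w ih =>
    cases b
    · cases k with
      | zero => rw [count_zero]; simp [N, ← ih, count_zero]
      | succ k => rw [count_false, ih, ih]; simp [N]
    · rw [count_true, ih]; simp [N]

lemma Ntot_eq (τ : List Bool) : indCount (threshOf τ) = Ntot τ := by
  induction τ with
  | nil => rw [total_nil]; rfl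
  | cons b w ih =>
    cases b
    · rw [total_false, ih]; rfl
    · rw [total_true, ih]; rfl

lemma Ecnt_eq (τ : List Bool) : edgeCount (threshOf τ) = Ecnt τ := by
  induction τ with
  | nil => rw [edge_nil]; rfl
  | cons b w ih =>
    rw [edge_cons, ih]
    cases b <;> simp [Ecnt]

lemma N_rep (j : ℕ) (w : List Bool) (k : ℕ) :
    N (List.replicate j true ++ w) k = N w k + j * (if k = 1 then 1 else 0) := by
  induction j with
  | zero => simp
  | succ j ih =>
    rw [List.replicate_succ, List.cons_append]
    show N (true :: (List.replicate j true ++ w)) k = _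
    rw [show N (true :: (List.replicate j true ++ w)) k
      = N (List.replicate j true ++ w) k + if k = 1 then 1 else 0 from rfl, ih]
    ring

lemma Ntot_rep (j : ℕ) (w : List Bool) :
    Ntot (List.replicate j true ++ w) = Ntot w + j := by
  induction j with
  | zero => simp
  | succ j ih =>
    rw [List.replicate_succ, List.cons_append]
    show Ntot (true :: (List.replicate j true ++ w)) = _
    rw [show Ntot (true :: (List.replicate j true ++ w))
      = Ntot (List.replicate j true ++ w) + 1 from rfl, ih]
    ring

lemma Ecnt_rep (j : ℕ) (w : List Bool) :
    Ecnt (List.replicate j true ++ w)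
      = Ecnt w + ∑ i ∈ Finset.range j, (w.length + i) := by
  induction j with
  | zero => simp
  | succ j ih =>
    rw [List.replicate_succ, List.cons_append]
    show Ecnt (true :: (List.replicate j true ++ w)) = _
    rw [show Ecnt (true :: (List.replicate j true ++ w))
      = Ecnt (List.replicate j true ++ w) + if true then (List.replicate j true ++ w).length else 0
      from rfl, ih, Finset.sum_range_succ]
    simp [List.length_append]
    ring

lemma N_key (σ : List Bool) (j k : ℕ) :
    N (true :: false :: (List.replicate j true ++ (false :: true :: σ))) k
      = N (false :: (List.replicate (j + 2) true ++ (false :: σ))) k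
        + (if k = 3 then 1 else 0) := by
  match k with
  | 0 => simp [N, N_rep]; all_goals omega
  | 1 => simp [N, N_rep]; all_goals omega
  | 2 => simp [N, N_rep]; all_goals omega
  | 3 => simp [N, N_rep]; all_goals omega
  | (k + 4) => simp [N, N_rep]; all_goals omega

lemma Ntot_key (σ : List Bool) (j : ℕ) :
    Ntot (true :: false :: (List.replicate j true ++ (false :: true :: σ)))
      = Ntot (false :: (List.replicate (j + 2) true ++ (false :: σ))) + 1 := by
  simp [Ntot, Ntot_rep]
  ring

lemma Ecnt_key (σ : List Bool) (j : ℕ) :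
    Ecnt (true :: false :: (List.replicate j true ++ (false :: true :: σ)))
      = Ecnt (false :: (List.replicate (j + 2) true ++ (false :: σ))) := by
  have l1 : Ecnt (true :: false :: (List.replicate j true ++ (false :: true :: σ)))
      = Ecnt (List.replicate j true ++ (false :: true :: σ))
        + ((List.replicate j true ++ (false :: true :: σ)).length + 1) := by
    simp [Ecnt]
  have l2 : Ecnt (false :: (List.replicate (j + 2) true ++ (false :: σ)))
      = Ecnt (List.replicate (j + 2) true ++ (false :: σ)) := by
    simp [Ecnt]
  rw [l1, l2, Ecnt_rep, Ecnt_rep]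
  have e1 : Ecnt (false :: true :: σ) = Ecnt σ + σ.length := by simp [Ecnt]
  have e2 : Ecnt (false :: σ) = Ecnt σ := by simp [Ecnt]
  have hlen1 : (false :: true :: σ).length = σ.length + 2 := by simp
  have hlen2 : (false :: σ).length = σ.length + 1 := by simp
  have hlen3 : (List.replicate j true ++ (false :: true :: σ)).length = j + (σ.length + 2) := by
    simp
  rw [e1, e2, hlen1, hlen2, hlen3]
  have hs : ∑ i ∈ Finset.range j, (σ.length + 2 + i)
      = (∑ i ∈ Finset.range j, (σ.length + 1 + i)) + j := by
    have : ∀ i ∈ Finset.range j, σ.length + 2 + i = (σ.length + 1 + i) + 1 := by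
      intro i _; ring
    rw [Finset.sum_congr rfl this, Finset.sum_add_distrib]
    simp
  have hs2 : ∑ i ∈ Finset.range (j + 2), (σ.length + 1 + i)
      = (∑ i ∈ Finset.range j, (σ.length + 1 + i)) + (σ.length + 1 + j) + (σ.length + 1 + (j+1)) := by
    rw [Finset.sum_range_succ, Finset.sum_range_succ]
  omega

lemma N_prefix (ρ x y : List Bool) (h : ∀ k, N y k ≤ N x k) :
    ∀ k, N (ρ ++ y) k ≤ N (ρ ++ x) k := by
  induction ρ with
  | nil => simpa using h
  | cons b ρ ih =>
    intro k
    cases b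
    · cases k with
      | zero =>
        simp only [List.cons_append]
        show N (ρ ++ y) 0 ≤ N (ρ ++ x) 0
        exact ih 0
      | succ k =>
        simp only [List.cons_append]
        show N (ρ ++ y) (k+1) + N (ρ ++ y) k ≤ N (ρ ++ x) (k+1) + N (ρ ++ x) k
        exact add_le_add (ih _) (ih _)
    · simp only [List.cons_append]
      show N (ρ ++ y) k + _ ≤ N (ρ ++ x) k + _
      exact add_le_add (ih k) le_rfl

lemma Ntot_prefix (ρ x y : List Bool) (h : Ntot y < Ntot x) :
    Ntot (ρ ++ y) < Ntot (ρ ++ x) := by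
  induction ρ with
  | nil => simpa using h
  | cons b ρ ih =>
    cases b
    · simp only [List.cons_append]
      show 2 * Ntot (ρ ++ y) < 2 * Ntot (ρ ++ x)
      omega
    · simp only [List.cons_append]
      show Ntot (ρ ++ y) + 1 < Ntot (ρ ++ x) + 1
      omega

lemma Ecnt_prefix (ρ x y : List Bool) (hlen : y.length = x.length) (h : Ecnt y = Ecnt x) :
    Ecnt (ρ ++ y) = Ecnt (ρ ++ x) := by
  induction ρ with
  | nil => simpa using h
  | cons b ρ ih =>
    simp only [List.cons_append]
    show Ecnt (ρ ++ y) + (if b then (ρ ++ y).length else 0)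
      = Ecnt (ρ ++ x) + (if b then (ρ ++ x).length else 0)
    rw [ih, List.length_append, List.length_append, hlen]

/-- For binary strings `ρ, σ` and `j ≥ 1`, the threshold graphs
`G = T(ρ 1 0 1^j 0 1 σ)` and `G' = T(ρ 0 1^{j+2} 0 σ)` have the same number of
vertices and edges, `i(G) > i(G')`, and `i_k(G) ≥ i_k(G')` for every `k`. -/
theorem nonconsecutive_zeros_indep_sets (ρ σ : List Bool) (j : ℕ) (hj : 1 ≤ j) :
    (ρ ++ [true, false] ++ List.replicate j true ++ [false, true] ++ σ).length =
        (ρ ++ [false] ++ List.replicate (j + 2) true ++ [false] ++ σ).length ∧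
      edgeCount (threshOf (ρ ++ [true, false] ++ List.replicate j true ++ [false, true] ++ σ)) =
        edgeCount (threshOf (ρ ++ [false] ++ List.replicate (j + 2) true ++ [false] ++ σ)) ∧
      indCount (threshOf (ρ ++ [false] ++ List.replicate (j + 2) true ++ [false] ++ σ)) <
        indCount (threshOf (ρ ++ [true, false] ++ List.replicate j true ++ [false, true] ++ σ)) ∧
      ∀ k : ℕ,
        indCountK (threshOf (ρ ++ [false] ++ List.replicate (j + 2) true ++ [false] ++ σ)) k ≤
          indCountK (threshOf (ρ ++ [true, false] ++ List.replicate j true ++ [false, true] ++ σ)) k := by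
  have hA : ρ ++ [true, false] ++ List.replicate j true ++ [false, true] ++ σ
      = ρ ++ (true :: false :: (List.replicate j true ++ (false :: true :: σ))) := by
    simp
  have hB : ρ ++ [false] ++ List.replicate (j + 2) true ++ [false] ++ σ
      = ρ ++ (false :: (List.replicate (j + 2) true ++ (false :: σ))) := by
    simp
  have hlen : (false :: (List.replicate (j + 2) true ++ (false :: σ))).length
      = (true :: false :: (List.replicate j true ++ (false :: true :: σ))).length := by
    simp; omega
  refine ⟨?_, ?_, ?_, ?_⟩
  · rw [hA, hB]
    simp only [List.length_append, hlen]
  · rw [hA, hB, Ecnt_eq, Ecnt_eq]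
    exact Ecnt_prefix ρ _ _ hlen.symm (Ecnt_key σ j)
  · rw [hA, hB, Ntot_eq, Ntot_eq]
    apply Ntot_prefix
    rw [Ntot_key]
    omega
  · intro k
    rw [hA, hB, N_eq, N_eq]
    refine N_prefix ρ _ _ (fun k => ?_) k
    rw [N_key]
    omega
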